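/- Let p₁, p₂, p₃ ∈ ℝ² be affinely independent, let e₁, e₂, e₃ ∈ ℝ² with e_i ∉ affineSpan{p_j, p_k} for {i,j,k} = {1,2,3} arrangement as needed, and suppose the three lines p_i e_i pass through a common point c not lying on any of the lines p_i p_j. Then there exist nonzero reals w₁₂, w₂₃, w₃₁, u₁, u₂, u₃ satisfying the equilibrium conditions u₁(p₁ - e₁) + w₁₂(p₁ - p₂) + w₃₁(p₁ - p₃) = 0, u₂(p₂ - e₂) + w₁₂(p₂ - p₁) + w₂₃(p₂ - p₃) = 0, u₃(p₃ - e₃) + w₂₃(p₃ - p₂) + w₃₁(p₃ - p₁) = 0. -/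

import Mathlib

/-- If the three framing lines of a framed triangle in the plane are concurrent
in a point in general position, then the framework admits an everywhere
non-zero self-stress. -/
theorem stmt_6 (p₁ p₂ p₃ e₁ e₂ e₃ : Fin 2 → ℝ)
    (hind : AffineIndependent ℝ ![p₁, p₂, p₃])
    (he₁ : e₁ ∉ affineSpan ℝ ({p₂, p₃} : Set (Fin 2 → ℝ)))
    (he₂ : e₂ ∉ affineSpan ℝ ({p₃, p₁} : Set (Fin 2 → ℝ)))
    (he₃ : e₃ ∉ affineSpan ℝ ({p₁, p₂} : Set (Fin 2 → ℝ)))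
    (hne₁ : e₁ ≠ p₁) (hne₂ : e₂ ≠ p₂) (hne₃ : e₃ ≠ p₃)
    (c : Fin 2 → ℝ)
    (hc₁ : ∃ s : ℝ, c = p₁ + s • (e₁ - p₁))
    (hc₂ : ∃ s : ℝ, c = p₂ + s • (e₂ - p₂))
    (hc₃ : ∃ s : ℝ, c = p₃ + s • (e₃ - p₃))
    (hc₁₂ : c ∉ affineSpan ℝ ({p₁, p₂} : Set (Fin 2 → ℝ)))
    (hc₂₃ : c ∉ affineSpan ℝ ({p₂, p₃} : Set (Fin 2 → ℝ)))
    (hc₃₁ : c ∉ affineSpan ℝ ({p₃, p₁} : Set (Fin 2 → ℝ))) :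
    ∃ w₁₂ w₂₃ w₃₁ u₁ u₂ u₃ : ℝ,
      w₁₂ ≠ 0 ∧ w₂₃ ≠ 0 ∧ w₃₁ ≠ 0 ∧ u₁ ≠ 0 ∧ u₂ ≠ 0 ∧ u₃ ≠ 0 ∧
      u₁ • (p₁ - e₁) + w₁₂ • (p₁ - p₂) + w₃₁ • (p₁ - p₃) = 0 ∧
      u₂ • (p₂ - e₂) + w₁₂ • (p₂ - p₁) + w₂₃ • (p₂ - p₃) = 0 ∧
      u₃ • (p₃ - e₃) + w₂₃ • (p₃ - p₂) + w₃₁ • (p₃ - p₁) = 0 := by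
  obtain ⟨s₁, hs₁⟩ := hc₁
  obtain ⟨s₂, hs₂⟩ := hc₂
  obtain ⟨s₃, hs₃⟩ := hc₃
  -- barycentric coordinates of c
  have htop : affineSpan ℝ (Set.range ![p₁, p₂, p₃]) = ⊤ := by
    rw [hind.affineSpan_eq_top_iff_card_eq_finrank_add_one]
    simp [Module.finrank_fintype_fun_eq_card]
  let b : AffineBasis (Fin 3) ℝ (Fin 2 → ℝ) := ⟨![p₁, p₂, p₃], hind, htop⟩
  set a₀ := b.coord 0 c with ha₀def
  set a₁ := b.coord 1 c with ha₁def
  set a₂ := b.coord 2 c with ha₂def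
  have hsum : a₀ + a₁ + a₂ = 1 := by
    have := b.sum_coord_apply_eq_one c
    rw [Fin.sum_univ_three] at this
    exact this
  have hc : a₀ • p₁ + a₁ • p₂ + a₂ • p₃ = c := by
    have := b.linear_combination_coord_eq_self c
    rw [Fin.sum_univ_three] at this
    exact this
  -- nonvanishing of barycentric coordinates
  have ha₀ : a₀ ≠ 0 := by
    intro h
    apply hc₂₃
    have hmem := smul_vsub_vadd_mem_affineSpan_pair (k := ℝ) a₂ p₂ p₃
    have : a₂ • (p₃ -ᵥ p₂) +ᵥ p₂ = c := by
      rw [← hc, h]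
      have h2 : a₁ + a₂ = 1 := by linarith
      show a₂ • (p₃ - p₂) + p₂ = _
      linear_combination (norm := module) (-h2) • p₂
    rwa [this] at hmem
  have ha₁ : a₁ ≠ 0 := by
    intro h
    apply hc₃₁
    have hmem := smul_vsub_vadd_mem_affineSpan_pair (k := ℝ) a₀ p₃ p₁
    have : a₀ • (p₁ -ᵥ p₃) +ᵥ p₃ = c := by
      rw [← hc, h]
      have h2 : a₀ + a₂ = 1 := by linarith
      show a₀ • (p₁ - p₃) + p₃ = _
      linear_combination (norm := module) (-h2) • p₃
    rwa [this] at hmem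
  have ha₂ : a₂ ≠ 0 := by
    intro h
    apply hc₁₂
    have hmem := smul_vsub_vadd_mem_affineSpan_pair (k := ℝ) a₁ p₁ p₂
    have : a₁ • (p₂ -ᵥ p₁) +ᵥ p₁ = c := by
      rw [← hc, h]
      have h2 : a₀ + a₁ = 1 := by linarith
      show a₁ • (p₂ - p₁) + p₁ = _
      linear_combination (norm := module) (-h2) • p₁
    rwa [this] at hmem
  -- nonvanishing of the parameters sᵢ
  have hs₁0 : s₁ ≠ 0 := by
    intro h
    apply hc₁₂
    rw [hs₁, h]
    simpa using left_mem_affineSpan_pair (k := ℝ) p₁ p₂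
  have hs₂0 : s₂ ≠ 0 := by
    intro h
    apply hc₂₃
    rw [hs₂, h]
    simpa using left_mem_affineSpan_pair (k := ℝ) p₂ p₃
  have hs₃0 : s₃ ≠ 0 := by
    intro h
    apply hc₃₁
    rw [hs₃, h]
    simpa using left_mem_affineSpan_pair (k := ℝ) p₃ p₁
  refine ⟨-(a₀ * a₁), -(a₁ * a₂), -(a₂ * a₀), s₁ * a₀, s₂ * a₁, s₃ * a₂,
    by simp [ha₀, ha₁], by simp [ha₁, ha₂], by simp [ha₂, ha₀],
    mul_ne_zero hs₁0 ha₀, mul_ne_zero hs₂0 ha₁, mul_ne_zero hs₃0 ha₂, ?_, ?_, ?_⟩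
  · have hp1 : (a₀ + a₁ + a₂) • p₁ = (1 : ℝ) • p₁ := by rw [hsum]
    linear_combination (norm := module) a₀ • hs₁ + a₀ • hc - a₀ • hp1
  · have hp2 : (a₀ + a₁ + a₂) • p₂ = (1 : ℝ) • p₂ := by rw [hsum]
    linear_combination (norm := module) a₁ • hs₂ + a₁ • hc - a₁ • hp2
  · have hp3 : (a₀ + a₁ + a₂) • p₃ = (1 : ℝ) • p₃ := by rw [hsum]
    linear_combination (norm := module) a₂ • hs₃ + a₂ • hc - a₂ • hp3
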